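/- Let f, g ∈ Γ₀(X) and x, y ∈ X. If ∂f(y) ∩ ∂g(x − y) ≠ ∅, then (f □ g)(x) = f(y) + g(x − y) and ∂(f □ g)(x) = ∂f(y) ∩ ∂g(x − y). -/

import Mathlib

open scoped RealInnerProductSpace

variable {X : Type*} [NormedAddCommGroup X] [InnerProductSpace ℝ X] [CompleteSpace X]

/-- The convex subdifferential of an extended-real-valued function. -/
def SubdiffAt (f : X → EReal) (x : X) : Set X :=
  {u | ∀ y, f x + ((⟪u, y - x⟫ : ℝ) : EReal) ≤ f y}

/-- A proper function: never `⊥` and not identically `⊤`. -/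
def ProperE (f : X → EReal) : Prop := (∀ x, f x ≠ ⊥) ∧ ∃ x, f x ≠ ⊤

/-- Convexity for extended-real-valued functions. -/
def EConvex (f : X → EReal) : Prop :=
  ∀ x y : X, ∀ a b : ℝ, 0 ≤ a → 0 ≤ b → a + b = 1 →
    f (a • x + b • y) ≤ (a : EReal) * f x + (b : EReal) * f y

/-- Membership in `Γ₀(X)`: proper, lower semicontinuous, convex. -/
def Gamma0 (f : X → EReal) : Prop := ProperE f ∧ LowerSemicontinuous f ∧ EConvex f

/-- The infimal convolution of `f` and `g`. -/
noncomputable def infConv (f g : X → EReal) : X → EReal := fun x => ⨅ y, f y + g (x - y)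

/-- A function with nonempty subdifferential at a point is not `⊤` there (if proper). -/
lemma ne_top_of_subdiff {f : X → EReal} (hprop : ProperE f) {x u : X}
    (hu : u ∈ SubdiffAt f x) : f x ≠ ⊤ := by
  intro htop
  obtain ⟨z, hz⟩ := hprop.2
  have h := hu z
  rw [htop] at h
  have : (⊤ : EReal) + ((⟪u, z - x⟫ : ℝ) : EReal) = ⊤ := EReal.top_add_coe _
  rw [this, top_le_iff] at h
  exact hz h

/-- If `∂f(y) ∩ ∂g(x − y) ≠ ∅`, then the infimal convolution is exact at `x` via `y` and
`∂(f □ g)(x) = ∂f(y) ∩ ∂g(x − y)`. -/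
theorem stmt_4 (f g : X → EReal) (hf : Gamma0 f) (hg : Gamma0 g) (x y : X)
    (h : (SubdiffAt f y ∩ SubdiffAt g (x - y)).Nonempty) :
    infConv f g x = f y + g (x - y) ∧
      SubdiffAt (infConv f g) x = SubdiffAt f y ∩ SubdiffAt g (x - y) := by
  obtain ⟨u, huf, hug⟩ := h
  have hfy_top : f y ≠ ⊤ := ne_top_of_subdiff hf.1 huf
  have hgy_top : g (x - y) ≠ ⊤ := ne_top_of_subdiff hg.1 hug
  have hfy_bot : f y ≠ ⊥ := hf.1.1 y
  have hgy_bot : g (x - y) ≠ ⊥ := hg.1.1 (x - y)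
  set p := (f y).toReal with hp_def
  set q := (g (x - y)).toReal with hq_def
  have hp : ((p : EReal)) = f y := EReal.coe_toReal hfy_top hfy_bot
  have hq : ((q : EReal)) = g (x - y) := EReal.coe_toReal hgy_top hgy_bot
  -- the key lower bound, for any element u' of the intersection and any point z w:
  have key : ∀ u', u' ∈ SubdiffAt f y → u' ∈ SubdiffAt g (x - y) → ∀ z w : X,
      ((p + q + ⟪u', z - x⟫ : ℝ) : EReal) ≤ f w + g (z - w) := by
    intro u' hu'f hu'g z w
    have h1 : ((p + ⟪u', w - y⟫ : ℝ) : EReal) ≤ f w := by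
      rw [EReal.coe_add, hp]; exact hu'f w
    have h2 : ((q + ⟪u', (z - w) - (x - y)⟫ : ℝ) : EReal) ≤ g (z - w) := by
      rw [EReal.coe_add, hq]; exact hu'g (z - w)
    have hinner : ⟪u', w - y⟫ + ⟪u', (z - w) - (x - y)⟫ = ⟪u', z - x⟫ := by
      rw [← inner_add_right]
      congr 1
      abel
    calc ((p + q + ⟪u', z - x⟫ : ℝ) : EReal)
        = ((p + ⟪u', w - y⟫ : ℝ) : EReal) + ((q + ⟪u', (z - w) - (x - y)⟫ : ℝ) : EReal) := by
          rw [← EReal.coe_add]; congr 1; rw [← hinner]; ring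
      _ ≤ f w + g (z - w) := add_le_add h1 h2
  have hexact : infConv f g x = f y + g (x - y) := by
    apply le_antisymm
    · exact iInf_le _ y
    · apply le_iInf
      intro w
      have := key u huf hug x w
      simpa [← hp, ← hq, ← EReal.coe_add] using this
  refine ⟨hexact, ?_⟩
  ext v
  constructor
  · intro hv
    have hvx : ∀ z, ((p + q + ⟪v, z - x⟫ : ℝ) : EReal) ≤ infConv f g z := by
      intro z
      have := hv z
      rw [hexact, ← hp, ← hq] at this
      simpa [← EReal.coe_add, add_assoc] using this
    constructor
    · intro z
      have h1 := hvx (z + (x - y))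
      have h2 : infConv f g (z + (x - y)) ≤ f z + g (x - y) := by
        have := iInf_le (fun w => f w + g (z + (x - y) - w)) z
        simpa [infConv] using this
      have h3 : ((p + ⟪v, z - y⟫ : ℝ) : EReal) + (q : EReal) ≤ f z + (q : EReal) := by
        have heq : ((p + ⟪v, z - y⟫ : ℝ) : EReal) + (q : EReal)
            = ((p + q + ⟪v, z + (x - y) - x⟫ : ℝ) : EReal) := by
          rw [← EReal.coe_add]
          norm_cast
          have hz : z + (x - y) - x = z - y := by abel
          rw [hz]; ring
        rw [heq, hq]
        exact h1.trans h2
      have h4 := (EReal.addLECancellable_coe q).add_le_add_iff_right.mp h3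
      rw [EReal.coe_add, hp] at h4
      exact h4
    · intro z
      have h1 := hvx (y + z)
      have h2 : infConv f g (y + z) ≤ f y + g z := by
        have := iInf_le (fun w => f w + g (y + z - w)) y
        simpa [infConv] using this
      have h3 : ((q + ⟪v, z - (x - y)⟫ : ℝ) : EReal) + (p : EReal) ≤ g z + (p : EReal) := by
        have heq : ((q + ⟪v, z - (x - y)⟫ : ℝ) : EReal) + (p : EReal)
            = ((p + q + ⟪v, (y + z) - x⟫ : ℝ) : EReal) := by
          rw [← EReal.coe_add]
          norm_cast
          have hz : (y + z) - x = z - (x - y) := by abel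
          rw [hz]; ring
        rw [heq, hp]
        exact (h1.trans h2).trans (le_of_eq (add_comm _ _))
      have h4 := (EReal.addLECancellable_coe p).add_le_add_iff_right.mp h3
      rw [EReal.coe_add, hq] at h4
      exact h4
  · rintro ⟨hvf, hvg⟩
    intro z
    rw [hexact, ← hp, ← hq]
    have : infConv f g z = ⨅ w, f w + g (z - w) := rfl
    rw [this]
    apply le_iInf
    intro w
    have := key v hvf hvg z w
    refine le_trans (le_of_eq ?_) this
    rw [← EReal.coe_add]
    norm_cast
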